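/- Let ε ∈ {1, −1} and let m₂, m₃, f, φ : ℝ → ℝ satisfy ε·m₂ = f, m₂' = φ·m₃, and m₃' = −φ·m₂ on ℝ (the asymptotic Darboux system m₁' = ε·m₂ − f, m₂' = φ·m₃ − ε·m₁, m₃' = −φ·m₂ with m₁ ≡ 0), where m₂, m₃ are differentiable and φ is differentiable with φ(θ) ≠ 0 for all θ. Then f is twice differentiable and satisfies f'' − (φ'/φ)·f' + φ²·f = 0 on ℝ. -/

import Mathlib

/-- Paper's equation (17): in the asymptotic Darboux system with `m₁ ≡ 0`,
the function `f` satisfies `f'' - (φ'/φ) f' + φ² f = 0`. -/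
theorem asymptotic_m1_eq_zero_f_ode
    (ε : ℝ) (hε : ε = 1 ∨ ε = -1)
    (m₂ m₃ f φ : ℝ → ℝ)
    (hm₂ : Differentiable ℝ m₂) (hm₃ : Differentiable ℝ m₃)
    (hφ : Differentiable ℝ φ) (hφ0 : ∀ θ, φ θ ≠ 0)
    (h1 : ∀ θ, ε * m₂ θ = f θ)
    (h2 : ∀ θ, deriv m₂ θ = φ θ * m₃ θ)
    (h3 : ∀ θ, deriv m₃ θ = -(φ θ) * m₂ θ) :
    Differentiable ℝ f ∧ Differentiable ℝ (deriv f) ∧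
      ∀ θ, deriv (deriv f) θ - (deriv φ θ / φ θ) * deriv f θ
          + (φ θ) ^ 2 * f θ = 0 := by
  have hfeq : f = fun θ => ε * m₂ θ := by funext θ; exact (h1 θ).symm
  have hf : Differentiable ℝ f := by
    rw [hfeq]; exact hm₂.const_mul ε
  have hderiv : deriv f = fun θ => ε * (φ θ * m₃ θ) := by
    funext θ
    rw [hfeq, deriv_const_mul _ (hm₂ θ), h2]
  have hdf : Differentiable ℝ (deriv f) := by
    rw [hderiv]; exact ((hφ.mul hm₃).const_mul ε)
  refine ⟨hf, hdf, fun θ => ?_⟩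
  have hdd : deriv (deriv f) θ = ε * (deriv φ θ * m₃ θ + φ θ * (-(φ θ) * m₂ θ)) := by
    rw [hderiv, deriv_const_mul (d := fun y => φ y * m₃ y) _ ((hφ θ).mul (hm₃ θ)),
      deriv_fun_mul (hφ θ) (hm₃ θ), h3]
  rw [hdd, hderiv, ← h1 θ]
  field_simp [hφ0 θ]
  ring
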